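/- Let d ≥ 2 and let (x_k)_{k≥1} be a sequence of points of [0,1]^d whose range is dense in [0,1]^d. Let Q_k be the open axis-parallel cube centered at x_k with side length 2^{-k-1}, and set H := ⋃_{k≥1} Q_k. Then: (a) L(H) ≤ 2^{-d} and L(∂H) ≥ 1 − 2^{-d} > 0; and (b) there exists c < ∞ such that L({x ∈ H : dist(x, ∂H) < r}) ≤ c·r for all r ∈ (0,1], and consequently ∫₀¹ (1/r)·L({x ∈ H : dist(x,∂H) < r}) dr < ∞. -/

import Mathlib

open MeasureTheory

section Helpers

variable {d : ℕ}

lemma coord_abs_le_dist' (y z : EuclideanSpace ℝ (Fin d)) (i : Fin d) : |z i - y i| ≤ dist z y := by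
  rw [EuclideanSpace.dist_eq]
  have h1 : |z i - y i| = Real.sqrt (dist (z i) (y i) ^ 2) := by
    rw [Real.sqrt_sq_eq_abs, Real.dist_eq, abs_abs]
  rw [h1]
  apply Real.sqrt_le_sqrt
  exact Finset.single_le_sum (f := fun j => dist (z j) (y j) ^ 2)
    (fun j _ => sq_nonneg _) (Finset.mem_univ i)

lemma box_open' (c : EuclideanSpace ℝ (Fin d)) (s : ℝ) :
    IsOpen {y : EuclideanSpace ℝ (Fin d) | ∀ i, |y i - c i| < s} := by
  have : {y : EuclideanSpace ℝ (Fin d) | ∀ i, |y i - c i| < s}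
      = ⋂ i, (fun y : EuclideanSpace ℝ (Fin d) => y i) ⁻¹' {t | |t - c i| < s} := by
    ext y; simp [Set.mem_iInter]
  rw [this]
  refine isOpen_iInter_of_finite fun i => ?_
  have hc : Continuous fun y : EuclideanSpace ℝ (Fin d) => y i :=
    (EuclideanSpace.proj i).continuous
  exact (isOpen_lt (by continuity) continuous_const).preimage hc

lemma volume_coord_set' (s : Fin d → Set ℝ) (hm : ∀ i, MeasurableSet (s i)) :
    volume {y : EuclideanSpace ℝ (Fin d) | ∀ i, y i ∈ s i} = ∏ i, volume (s i) := by
  have key : {y : EuclideanSpace ℝ (Fin d) | ∀ i, y i ∈ s i}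
      = (MeasurableEquiv.toLp 2 (Fin d → ℝ)).symm ⁻¹' (Set.univ.pi s) := by
    ext y; simp [Set.mem_pi, MeasurableEquiv.toLp]; rfl
  rw [key, (EuclideanSpace.volume_preserving_symm_measurableEquiv_toLp (Fin d)).measure_preimage
    ((MeasurableSet.univ_pi hm).nullMeasurableSet), volume_pi_pi]

lemma box_volume' (c : EuclideanSpace ℝ (Fin d)) (s : ℝ) :
    volume {y : EuclideanSpace ℝ (Fin d) | ∀ i, |y i - c i| < s}
      = (ENNReal.ofReal (2 * s)) ^ d := by
  have hset : {y : EuclideanSpace ℝ (Fin d) | ∀ i, |y i - c i| < s}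
      = {y : EuclideanSpace ℝ (Fin d) | ∀ i, y i ∈ Set.Ioo (c i - s) (c i + s)} := by
    ext y
    simp only [Set.mem_setOf_eq, Set.mem_Ioo, abs_lt]
    constructor <;> intro hy i <;> have := hy i <;> constructor <;> linarith [this.1, this.2]
  rw [hset, volume_coord_set' _ (fun i => measurableSet_Ioo)]
  have : ∀ i : Fin d, volume (Set.Ioo (c i - s) (c i + s)) = ENNReal.ofReal (2 * s) := by
    intro i; rw [Real.volume_Ioo]; congr 1; ring
  simp [this]

lemma ofReal_half_pow (n : ℕ) :
    ENNReal.ofReal ((2⁻¹ : ℝ) ^ n) = (2⁻¹ : ENNReal) ^ n := by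
  rw [ENNReal.ofReal_pow (by norm_num)]
  congr 1
  rw [ENNReal.ofReal_inv_of_pos (by norm_num)]
  norm_num

lemma tsum_half_pow : ∑' k : ℕ, (2⁻¹ : ENNReal) ^ k = 2 := by
  rw [ENNReal.tsum_geometric, ENNReal.one_sub_inv_two, inv_inv]

lemma pow_sub_pow_le' {a b : ℝ} (hb : 0 ≤ b) (hba : b ≤ a) (n : ℕ) :
    a ^ (n + 1) - b ^ (n + 1) ≤ ((n : ℝ) + 1) * a ^ n * (a - b) := by
  induction n with
  | zero => simp
  | succ n ih =>
    have ha : (0:ℝ) ≤ a := hb.trans hba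
    have h1 : a * (a ^ (n + 1) - b ^ (n + 1)) ≤ a * (((n : ℝ) + 1) * a ^ n * (a - b)) :=
      mul_le_mul_of_nonneg_left ih ha
    have h2 : (a - b) * b ^ (n + 1) ≤ (a - b) * a ^ (n + 1) :=
      mul_le_mul_of_nonneg_left (pow_le_pow_left₀ hb hba (n + 1)) (sub_nonneg.2 hba)
    calc a ^ (n + 1 + 1) - b ^ (n + 1 + 1)
        = a * (a ^ (n + 1) - b ^ (n + 1)) + (a - b) * b ^ (n + 1) := by ring
      _ ≤ a * (((n : ℝ) + 1) * a ^ n * (a - b)) + (a - b) * a ^ (n + 1) := add_le_add h1 h2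
      _ = ((n + 1 : ℕ) + 1 : ℝ) * a ^ (n + 1) * (a - b) := by push_cast; ring

end Helpers

/-- The counterexample of Proposition 1.3(ii): for a dense sequence `(x_k)_{k≥1}` in `[0,1]^d`
(`d ≥ 2`), the union `H` of open axis-parallel cubes `Q_k` centered at `x_k` with side
`2^{-k-1}` satisfies `L(H) ≤ 2^{-d}`, `L(∂H) ≥ 1 - 2^{-d} > 0`, and there exists `c < ∞` with
`L([∂H]^r) ≤ c·r` for `r ∈ (0,1]`, whence `∫₀¹ (1/r)·L([∂H]^r) dr < ∞`.
Here the sequence is indexed by `k : ℕ` corresponding to the paper's index `k+1`, so the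
cube around `x k` has side `2^{-(k+1)-1} = 2^{-k-2}` (half-side `2^{-k-3}`). -/
theorem union_of_cubes_counterexample (d : ℕ) (hd : 2 ≤ d)
    (x : ℕ → EuclideanSpace ℝ (Fin d))
    (hx : ∀ k i, x k i ∈ Set.Icc (0:ℝ) 1)
    (hdense : {y : EuclideanSpace ℝ (Fin d) | ∀ i, y i ∈ Set.Icc (0:ℝ) 1}
      ⊆ closure (Set.range x))
    (H : Set (EuclideanSpace ℝ (Fin d)))
    (hH : H = ⋃ k : ℕ, {y | ∀ i, |y i - x k i| < (2:ℝ) ^ (-(k:ℤ) - 3)}) :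
    (volume H ≤ ENNReal.ofReal ((2:ℝ) ^ (-(d:ℤ))) ∧
      ENNReal.ofReal (1 - (2:ℝ) ^ (-(d:ℤ))) ≤ volume (frontier H) ∧
      0 < volume (frontier H)) ∧
    ∃ c : ℝ, (∀ r ∈ Set.Ioc (0:ℝ) 1,
        volume {y | y ∈ H ∧ Metric.infDist y (frontier H) < r} ≤ ENNReal.ofReal (c * r)) ∧
      ∫⁻ r in Set.Ioc (0:ℝ) 1, ENNReal.ofReal (1/r) *
        volume {y | y ∈ H ∧ Metric.infDist y (frontier H) < r} < ⊤ := by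
  have hd1 : 1 ≤ d := le_trans (by norm_num) hd
  -- half-side lengths
  set h : ℕ → ℝ := fun k => (2:ℝ) ^ (-(k:ℤ) - 3) with hhdef
  have hval : ∀ k, h k = (2⁻¹ : ℝ) ^ (k + 3) := by
    intro k
    rw [hhdef]
    show (2:ℝ) ^ (-(k:ℤ) - 3) = (2⁻¹ : ℝ) ^ (k + 3)
    rw [show (-(k:ℤ) - 3) = -((k + 3 : ℕ) : ℤ) by push_cast; ring, zpow_neg, zpow_natCast,
      inv_pow]
  have hpos : ∀ k, 0 < h k := by
    intro k; rw [hval]; positivity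
  have hside : ∀ k, 2 * h k = (2⁻¹ : ℝ) ^ (k + 2) := by
    intro k; rw [hval, pow_succ]; ring
  have hside_le_one : ∀ k, 2 * h k ≤ 1 := by
    intro k; rw [hside]
    exact pow_le_one₀ (by norm_num) (by norm_num)
  -- the cubes
  set Q : ℕ → Set (EuclideanSpace ℝ (Fin d)) := fun k => {y | ∀ i, |y i - x k i| < h k}
    with hQdef
  have hHQ : H = ⋃ k, Q k := hH
  have hQopen : ∀ k, IsOpen (Q k) := fun k => box_open' (x k) (h k)
  have hHopen : IsOpen H := by rw [hHQ]; exact isOpen_iUnion fun k => hQopen k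
  have hvolQ : ∀ k, volume (Q k) = (2⁻¹ : ENNReal) ^ ((k + 2) * d) := by
    intro k
    rw [hQdef]
    rw [box_volume' (x k) (h k), hside k, ofReal_half_pow, ← pow_mul]
  -- the target bound 2^{-d} as an ENNReal power
  have hofd : ENNReal.ofReal ((2:ℝ) ^ (-(d:ℤ))) = (2⁻¹ : ENNReal) ^ d := by
    rw [show ((2:ℝ) ^ (-(d:ℤ))) = (2⁻¹ : ℝ) ^ d by
      rw [zpow_neg, zpow_natCast, inv_pow], ofReal_half_pow]
  -- (a) volume of H
  have hvolH : volume H ≤ ENNReal.ofReal ((2:ℝ) ^ (-(d:ℤ))) := by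
    rw [hHQ, hofd]
    calc volume (⋃ k, Q k) ≤ ∑' k, volume (Q k) := measure_iUnion_le _
      _ = ∑' k : ℕ, (2⁻¹ : ENNReal) ^ ((k + 2) * d) := by simp_rw [hvolQ]
      _ ≤ ∑' k : ℕ, (2⁻¹ : ENNReal) ^ (k + 2 * d) := by
          refine ENNReal.tsum_le_tsum fun k => ?_
          refine pow_le_pow_right_of_le_one' (by norm_num) ?_
          calc k + 2 * d = k * 1 + 2 * d := by ring
            _ ≤ k * d + 2 * d := by
                exact add_le_add_left (Nat.mul_le_mul_left k hd1) _
            _ = (k + 2) * d := by ring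
      _ = (∑' k : ℕ, (2⁻¹ : ENNReal) ^ k) * (2⁻¹ : ENNReal) ^ (2 * d) := by
          rw [← ENNReal.tsum_mul_right]; congr 1; ext k; rw [pow_add]
      _ = 2 * (2⁻¹ : ENNReal) ^ (2 * d) := by rw [tsum_half_pow]
      _ = (2 * (2⁻¹ : ENNReal) ^ d) * (2⁻¹ : ENNReal) ^ d := by
          rw [two_mul d, pow_add]; ring
      _ ≤ 1 * (2⁻¹ : ENNReal) ^ d := by
          refine mul_le_mul' ?_ le_rfl
          calc 2 * (2⁻¹ : ENNReal) ^ d ≤ 2 * (2⁻¹ : ENNReal) ^ 1 := by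
                refine mul_le_mul' le_rfl (pow_le_pow_right_of_le_one' (by norm_num) hd1)
            _ = 1 := by
                rw [pow_one]
                exact ENNReal.mul_inv_cancel (by norm_num) (by norm_num)
      _ = (2⁻¹ : ENNReal) ^ d := one_mul _
  -- the unit cube
  set B : Set (EuclideanSpace ℝ (Fin d)) := {y | ∀ i, y i ∈ Set.Icc (0:ℝ) 1} with hBdef
  have hvolB : volume B = 1 := by
    rw [hBdef, volume_coord_set' _ (fun i => measurableSet_Icc)]
    simp [Real.volume_Icc]
  -- B ⊆ closure H
  have hBcl : B ⊆ closure H := by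
    refine hdense.trans (closure_mono ?_)
    rintro _ ⟨k, rfl⟩
    rw [hHQ]
    exact Set.mem_iUnion.2 ⟨k, fun i => by simpa using hpos k⟩
  have hBH : B \ H ⊆ frontier H := by
    rw [hHopen.frontier_eq]
    exact fun y hy => ⟨hBcl hy.1, hy.2⟩
  -- (a) frontier measure lower bound
  have hfr : ENNReal.ofReal (1 - (2:ℝ) ^ (-(d:ℤ))) ≤ volume (frontier H) := by
    calc ENNReal.ofReal (1 - (2:ℝ) ^ (-(d:ℤ)))
        = 1 - ENNReal.ofReal ((2:ℝ) ^ (-(d:ℤ))) := by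
          rw [ENNReal.ofReal_sub _ (by positivity), ENNReal.ofReal_one]
      _ ≤ volume B - volume H := by
          rw [hvolB]; exact tsub_le_tsub le_rfl hvolH
      _ ≤ volume (B \ H) := le_measure_diff
      _ ≤ volume (frontier H) := measure_mono hBH
  have hfrpos : 0 < volume (frontier H) := by
    refine lt_of_lt_of_le ?_ hfr
    rw [ENNReal.ofReal_pos]
    have : (2:ℝ) ^ (-(d:ℤ)) < 1 := by
      rw [show ((2:ℝ) ^ (-(d:ℤ))) = (2⁻¹ : ℝ) ^ d by rw [zpow_neg, zpow_natCast, inv_pow]]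
      exact pow_lt_one₀ (by norm_num) (by norm_num) (by omega)
    linarith
  have hfrne : (frontier H).Nonempty := by
    rw [Set.nonempty_iff_ne_empty]
    rintro he
    rw [he] at hfrpos
    simp at hfrpos
  -- (b) the key neighbourhood bound
  have hkey : ∀ r ∈ Set.Ioc (0:ℝ) 1,
      volume {y | y ∈ H ∧ Metric.infDist y (frontier H) < r} ≤ ENNReal.ofReal ((d:ℝ) * r) := by
    intro r hr
    obtain ⟨hr0, hr1⟩ := hr
    -- inner cubes
    set Bk : ℕ → Set (EuclideanSpace ℝ (Fin d)) := fun k => {y | ∀ i, |y i - x k i| < h k - r}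
      with hBkdef
    have hsub : {y | y ∈ H ∧ Metric.infDist y (frontier H) < r} ⊆ ⋃ k, (Q k \ Bk k) := by
      rintro y ⟨hyH, hyd⟩
      rw [hHQ] at hyH
      obtain ⟨k, hyk⟩ := Set.mem_iUnion.1 hyH
      refine Set.mem_iUnion.2 ⟨k, hyk, fun hyB => ?_⟩
      obtain ⟨z, hz, hdz⟩ := (Metric.infDist_lt_iff hfrne).1 hyd
      have hzH : z ∈ H := by
        rw [hHQ]
        refine Set.mem_iUnion.2 ⟨k, fun i => ?_⟩
        have h1 : |z i - y i| ≤ dist z y := coord_abs_le_dist' y z i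
        have h2 : |y i - x k i| < h k - r := hyB i
        have h3 : dist z y < r := by rw [dist_comm]; exact hdz
        calc |z i - x k i| ≤ |z i - y i| + |y i - x k i| := abs_sub_le _ _ _
          _ < r + (h k - r) := by
              exact add_lt_add_of_le_of_lt (h1.trans h3.le) h2
          _ = h k := by ring
      rw [hHopen.frontier_eq] at hz
      exact hz.2 hzH
    -- volume of each annulus
    have hannulus : ∀ k, volume (Q k \ Bk k) ≤
        ENNReal.ofReal ((d:ℝ) * (2 * h k) ^ (d - 1) * (2 * r)) := by
      intro k
      obtain ⟨m, hm⟩ : ∃ m, d = m + 1 := ⟨d - 1, by omega⟩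
      have h2h : (0:ℝ) ≤ 2 * h k := by linarith [(hpos k).le]
      rcases le_or_gt (h k) r with hcase | hcase
      · -- r ≥ h k : crude bound by whole cube
        calc volume (Q k \ Bk k) ≤ volume (Q k) := measure_mono Set.diff_subset
          _ = (ENNReal.ofReal (2 * h k)) ^ d := box_volume' (x k) (h k)
          _ = ENNReal.ofReal ((2 * h k) ^ d) := (ENNReal.ofReal_pow h2h d).symm
          _ ≤ ENNReal.ofReal ((d:ℝ) * (2 * h k) ^ (d - 1) * (2 * r)) := by
              refine ENNReal.ofReal_le_ofReal ?_
              rw [hm]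
              simp only [Nat.add_sub_cancel]
              calc (2 * h k) ^ (m + 1) = (2 * h k) ^ m * (2 * h k) := by ring
                _ ≤ (2 * h k) ^ m * (2 * r) := by
                    refine mul_le_mul_of_nonneg_left (by linarith) (pow_nonneg h2h m)
                _ ≤ ((m:ℝ) + 1) * (2 * h k) ^ m * (2 * r) := by
                    refine mul_le_mul_of_nonneg_right ?_ (by linarith)
                    nlinarith [pow_nonneg h2h m]
                _ = ((m + 1 : ℕ) : ℝ) * (2 * h k) ^ m * (2 * r) := by push_cast; ring
      · -- r < h k : subtract the inner cube
        have hBsub : Bk k ⊆ Q k := by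
          intro y hy i
          exact lt_of_lt_of_le (hy i) (by linarith)
        have hBkvol : volume (Bk k) = ENNReal.ofReal ((2 * (h k - r)) ^ d) := by
          rw [hBkdef]
          rw [box_volume' (x k) (h k - r), ENNReal.ofReal_pow (by linarith)]
        have hfin : volume (Bk k) ≠ ⊤ := by rw [hBkvol]; exact ENNReal.ofReal_ne_top
        rw [measure_diff hBsub (box_open' (x k) (h k - r)).measurableSet.nullMeasurableSet hfin,
          box_volume' (x k) (h k), hBkvol, ← ENNReal.ofReal_pow h2h,
          ← ENNReal.ofReal_sub _ (pow_nonneg (by linarith) d)]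
        refine ENNReal.ofReal_le_ofReal ?_
        rw [hm]
        simp only [Nat.add_sub_cancel]
        have := pow_sub_pow_le' (a := 2 * h k) (b := 2 * (h k - r)) (by linarith) (by linarith) m
        calc (2 * h k) ^ (m + 1) - (2 * (h k - r)) ^ (m + 1)
            ≤ ((m:ℝ) + 1) * (2 * h k) ^ m * (2 * h k - 2 * (h k - r)) := this
          _ = ((m + 1 : ℕ) : ℝ) * (2 * h k) ^ m * (2 * r) := by push_cast; ring
    -- sum up
    calc volume {y | y ∈ H ∧ Metric.infDist y (frontier H) < r}
        ≤ volume (⋃ k, (Q k \ Bk k)) := measure_mono hsub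
      _ ≤ ∑' k, volume (Q k \ Bk k) := measure_iUnion_le _
      _ ≤ ∑' k : ℕ, ENNReal.ofReal ((d:ℝ) * (2 * h k) ^ (d - 1) * (2 * r)) :=
          ENNReal.tsum_le_tsum hannulus
      _ ≤ ∑' k : ℕ, ENNReal.ofReal ((d:ℝ) * r) * (2⁻¹ : ENNReal) ^ (k + 1) := by
          refine ENNReal.tsum_le_tsum fun k => ?_
          have h2h : (0:ℝ) ≤ 2 * h k := by linarith [(hpos k).le]
          have hppow : (2 * h k) ^ (d - 1) ≤ 2 * h k := by
            calc (2 * h k) ^ (d - 1) ≤ (2 * h k) ^ 1 :=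
                pow_le_pow_of_le_one h2h (hside_le_one k) (by omega)
              _ = 2 * h k := pow_one _
          calc ENNReal.ofReal ((d:ℝ) * (2 * h k) ^ (d - 1) * (2 * r))
              ≤ ENNReal.ofReal ((d:ℝ) * r * (2⁻¹ : ℝ) ^ (k + 1)) := by
                refine ENNReal.ofReal_le_ofReal ?_
                have : (d:ℝ) * (2 * h k) ^ (d - 1) * (2 * r) ≤ (d:ℝ) * (2 * h k) * (2 * r) := by
                  have hd0 : (0:ℝ) ≤ (d:ℝ) := Nat.cast_nonneg d
                  refine mul_le_mul_of_nonneg_right ?_ (by linarith)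
                  exact mul_le_mul_of_nonneg_left hppow hd0
                refine this.trans ?_
                rw [hside k, pow_succ, pow_succ]
                ring_nf
                nlinarith [pow_nonneg (show (0:ℝ) ≤ 2⁻¹ by norm_num) k, hr0,
                  Nat.cast_nonneg (α := ℝ) d]
            _ = ENNReal.ofReal ((d:ℝ) * r) * (2⁻¹ : ENNReal) ^ (k + 1) := by
                rw [ENNReal.ofReal_mul (by positivity), ofReal_half_pow]
      _ = ENNReal.ofReal ((d:ℝ) * r) * ∑' k : ℕ, (2⁻¹ : ENNReal) ^ (k + 1) := by
          rw [ENNReal.tsum_mul_left]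
      _ = ENNReal.ofReal ((d:ℝ) * r) := by
          have : ∑' k : ℕ, (2⁻¹ : ENNReal) ^ (k + 1)
              = (2⁻¹ : ENNReal) * ∑' k : ℕ, (2⁻¹ : ENNReal) ^ k := by
            rw [← ENNReal.tsum_mul_left]; congr 1; ext k; rw [pow_succ]; ring
          rw [this, tsum_half_pow, ENNReal.inv_mul_cancel (by norm_num) (by norm_num), mul_one]
  refine ⟨⟨hvolH, hfr, hfrpos⟩, (d:ℝ), hkey, ?_⟩
  -- the integral
  calc ∫⁻ r in Set.Ioc (0:ℝ) 1, ENNReal.ofReal (1/r) *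
        volume {y | y ∈ H ∧ Metric.infDist y (frontier H) < r}
      ≤ ∫⁻ _ in Set.Ioc (0:ℝ) 1, ENNReal.ofReal (d:ℝ) := by
        refine setLIntegral_mono' measurableSet_Ioc fun r hr => ?_
        calc ENNReal.ofReal (1/r) * volume {y | y ∈ H ∧ Metric.infDist y (frontier H) < r}
            ≤ ENNReal.ofReal (1/r) * ENNReal.ofReal ((d:ℝ) * r) :=
              mul_le_mul_right (hkey r hr) _
          _ = ENNReal.ofReal ((1/r) * ((d:ℝ) * r)) :=
              (ENNReal.ofReal_mul (one_div_nonneg.2 hr.1.le)).symm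
          _ = ENNReal.ofReal (d:ℝ) := by
              congr 1
              field_simp
              rw [div_self hr.1.ne']
    _ = ENNReal.ofReal (d:ℝ) * volume (Set.Ioc (0:ℝ) 1) := by
        rw [setLIntegral_const]
    _ < ⊤ := by
        rw [Real.volume_Ioc]
        exact ENNReal.mul_lt_top ENNReal.ofReal_lt_top ENNReal.ofReal_lt_top
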